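/- Let F be a field, let R = F[X; ℕ×ℕ] be the additive monoid ring of the monoid ℕ₀ × ℕ₀ over F, let m be the maximal ideal of R consisting of all elements with zero constant term, and let D = R_m be the localization of R at m. Then the ideal of D generated by the images of the monomials X^{(1,0)} and X^{(0,1)} is a proper ideal that is not contained in any proper principal ideal of D; in particular D does not satisfy the PC condition. -/

import Mathlib

open scoped Classical

/-- The "constant term" homomorphism of a monoid algebra `F[X; M]`, for a monoid `M` in
which `a + b = 0` forces `a = b = 0`; it sends `a₁X^{α₁} + ⋯ + aₙX^{αₙ}` to its
coefficient at the identity `0` of `M` (see `constantTermHom_apply`). -/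
noncomputable def constantTermHom (F M : Type*) [Field F] [AddCommMonoid M]
    (hM : ∀ a b : M, a + b = 0 → a = 0 ∧ b = 0) : AddMonoidAlgebra F M →ₐ[F] F :=
  AddMonoidAlgebra.lift F F M
    { toFun := fun a => if a.toAdd = 0 then 1 else 0
      map_one' := by simp
      map_mul' := fun a b => by
        rcases em (a.toAdd = 0) with ha | ha
        · rcases em (b.toAdd = 0) with hb | hb
          · simp [ha, hb]
          · have h : a.toAdd + b.toAdd ≠ 0 := fun h => hb (hM _ _ h).2
            simp [ha, hb, toAdd_mul, h]
        · have h : a.toAdd + b.toAdd ≠ 0 := fun h => ha (hM _ _ h).1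
          simp [ha, toAdd_mul, h] }

theorem constantTermHom_apply (F M : Type*) [Field F] [AddCommMonoid M]
    (hM : ∀ a b : M, a + b = 0 → a = 0 ∧ b = 0) (f : AddMonoidAlgebra F M) :
    constantTermHom F M hM f = f.coeff 0 := by
  classical
  rw [constantTermHom, AddMonoidAlgebra.lift_apply]
  simp only [MonoidHom.coe_mk, OneHom.coe_mk, toAdd_ofAdd, smul_eq_mul, mul_ite, mul_one,
    mul_zero]
  rw [Finsupp.sum_ite_eq' f.coeff 0 (fun _ b => b)]
  split
  · rfl
  · next h => exact (Finsupp.notMem_support_iff.mp h).symm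

/-- The augmentation ideal of the monoid algebra `F[X; M]`, consisting of all elements
with zero constant term (zero coefficient at the identity of `M`). -/
noncomputable def augIdeal (F M : Type*) [Field F] [AddCommMonoid M]
    (hM : ∀ a b : M, a + b = 0 → a = 0 ∧ b = 0) : Ideal (AddMonoidAlgebra F M) :=
  RingHom.ker (constantTermHom F M hM)

theorem mem_augIdeal_iff (F M : Type*) [Field F] [AddCommMonoid M]
    (hM : ∀ a b : M, a + b = 0 → a = 0 ∧ b = 0) (f : AddMonoidAlgebra F M) :
    f ∈ augIdeal F M hM ↔ f.coeff 0 = 0 := by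
  rw [augIdeal, RingHom.mem_ker, constantTermHom_apply]

/-- The augmentation ideal is a maximal ideal. -/
instance augIdeal_isMaximal (F M : Type*) [Field F] [AddCommMonoid M]
    {hM : ∀ a b : M, a + b = 0 → a = 0 ∧ b = 0} : (augIdeal F M hM).IsMaximal :=
  RingHom.ker_isMaximal_of_surjective _ (fun c =>
    ⟨AddMonoidAlgebra.single 0 c, by simp [constantTermHom_apply]⟩)

theorem natnat_pos_monoid : ∀ a b : ℕ × ℕ, a + b = 0 → a = 0 ∧ b = 0 := fun a b h => by
  simp only [Prod.ext_iff, Prod.fst_add, Prod.snd_add, Prod.fst_zero, Prod.snd_zero] at h ⊢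
  omega



noncomputable def projHom (F : Type*) [Field F] :
    AddMonoidAlgebra F (ℕ × ℕ) →ₐ[F] AddMonoidAlgebra F ℕ :=
  AddMonoidAlgebra.lift F (AddMonoidAlgebra F ℕ) (ℕ × ℕ)
    { toFun := fun a => if a.toAdd.2 = 0 then AddMonoidAlgebra.single a.toAdd.1 1 else 0
      map_one' := by simp [AddMonoidAlgebra.one_def]
      map_mul' := fun a b => by
        rcases em (a.toAdd.2 = 0) with ha | ha
        · rcases em (b.toAdd.2 = 0) with hb | hb
          · simp [toAdd_mul, Prod.snd_add, Prod.fst_add, ha, hb,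
              AddMonoidAlgebra.single_mul_single]
          · have h : (a.toAdd + b.toAdd).2 ≠ 0 := by simp [Prod.snd_add, ha, hb]
            simp [toAdd_mul, ha, hb, h]
        · have h : (a.toAdd + b.toAdd).2 ≠ 0 := by
            simp only [Prod.snd_add]; omega
          simp [toAdd_mul, ha, h] }

theorem projHom_single (F : Type*) [Field F] (a : ℕ × ℕ) (c : F) :
    projHom F (AddMonoidAlgebra.single a c) =
      if a.2 = 0 then AddMonoidAlgebra.single a.1 c else 0 := by
  rw [projHom, AddMonoidAlgebra.lift_single]
  simp only [MonoidHom.coe_mk, OneHom.coe_mk, toAdd_ofAdd]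
  split_ifs <;> simp [AddMonoidAlgebra.smul_single']

theorem projHom_apply_zero (F : Type*) [Field F] (f : AddMonoidAlgebra F (ℕ × ℕ)) :
    (projHom F f).coeff 0 = f.coeff 0 := by
  classical
  rw [projHom, AddMonoidAlgebra.lift_apply, AddMonoidAlgebra.coeff_finsuppSum, Finsupp.sum_apply]
  rw [Finsupp.sum_congr (g2 := fun a b => if a = 0 then b else 0) ?_,
    Finsupp.sum_ite_eq' f.coeff 0 (fun _ b => b)]
  · split
    · rfl
    · next h => exact (Finsupp.notMem_support_iff.mp h).symm
  · intro a _
    simp only [MonoidHom.coe_mk, OneHom.coe_mk, toAdd_ofAdd]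
    rcases em (a.2 = 0) with h2 | h2
    · simp [h2, Finsupp.smul_apply, Finsupp.single_apply, Prod.ext_iff, eq_comm]
    · have : ¬ a = 0 := fun h => h2 (by simp [h])
      simp [h2, this]

theorem mul_apply_zero_one (F : Type*) [Field F] (f g : AddMonoidAlgebra F (ℕ × ℕ)) :
    (f * g).coeff (0, 1) = f.coeff 0 * g.coeff (0, 1) + f.coeff (0, 1) * g.coeff 0 := by
  classical
  rw [AddMonoidAlgebra.coeff_mul_antidiag f g (0, 1)
    {(((0 : ℕ), (0 : ℕ)), ((0 : ℕ), (1 : ℕ))), (((0 : ℕ), (1 : ℕ)), ((0 : ℕ), (0 : ℕ)))} ?_]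
  · rw [Finset.sum_insert (by decide), Finset.sum_singleton]
    rfl
  · intro p
    simp only [Finset.mem_insert, Finset.mem_singleton, Prod.ext_iff]
    constructor
    · rintro (⟨h1, h2⟩ | ⟨h1, h2⟩) <;> simp_all
    · rintro ⟨h1, h2⟩
      rcases p with ⟨⟨a, b⟩, ⟨c, d⟩⟩
      simp_all
      omega

theorem core_contradiction (F : Type*) [Field F]
    (r p p' t t' : AddMonoidAlgebra F (ℕ × ℕ))
    (ht : t.coeff 0 ≠ 0) (ht' : t'.coeff 0 ≠ 0) (hr : r.coeff 0 = 0)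
    (h1 : AddMonoidAlgebra.single ((1 : ℕ), (0 : ℕ)) (1 : F) * t = r * p)
    (h2 : AddMonoidAlgebra.single ((0 : ℕ), (1 : ℕ)) (1 : F) * t' = r * p') : False := by
  classical
  have hφX : projHom F (AddMonoidAlgebra.single ((1 : ℕ), (0 : ℕ)) (1 : F)) =
      AddMonoidAlgebra.single 1 1 := by rw [projHom_single]; simp
  have hφY : projHom F (AddMonoidAlgebra.single ((0 : ℕ), (1 : ℕ)) (1 : F)) = 0 := by
    rw [projHom_single]; simp
  have hrne : projHom F r ≠ 0 := by
    intro h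
    have h1' := congrArg (projHom F) h1
    rw [map_mul, map_mul, hφX, h, zero_mul] at h1'
    rcases mul_eq_zero.mp h1' with hh | hh
    · exact one_ne_zero ((AddMonoidAlgebra.single_eq_zero).mp hh)
    · have := projHom_apply_zero F t
      rw [hh] at this
      exact ht (by simpa using this.symm)
  have hp'0 : p'.coeff 0 = 0 := by
    have h2' := congrArg (projHom F) h2
    rw [map_mul, map_mul, hφY, zero_mul] at h2'
    rcases mul_eq_zero.mp h2'.symm with hh | hh
    · exact absurd hh hrne
    · have := projHom_apply_zero F p'
      rw [hh] at this
      simpa using this.symm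
  have hc := congrArg (fun f : AddMonoidAlgebra F (ℕ × ℕ) => f.coeff ((0 : ℕ), (1 : ℕ))) h2
  rw [mul_apply_zero_one, mul_apply_zero_one] at hc
  have h0 : (0 : ℕ × ℕ) = ((0 : ℕ), (0 : ℕ)) := rfl
  rw [h0] at hc hr hp'0 ht'
  rw [AddMonoidAlgebra.coeff_single_apply, AddMonoidAlgebra.coeff_single_apply, hr, hp'0] at hc
  norm_num at hc
  exact ht' hc
/-- The image in `D = R_m` of the monomial `X^α` of `R = F[X; ℕ × ℕ]`. -/
noncomputable def monomialImage (F : Type*) [Field F] (α : ℕ × ℕ) :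
    Localization.AtPrime (augIdeal F (ℕ × ℕ) natnat_pos_monoid) :=
  algebraMap (AddMonoidAlgebra F (ℕ × ℕ))
    (Localization.AtPrime (augIdeal F (ℕ × ℕ) natnat_pos_monoid))
    (AddMonoidAlgebra.single α (1 : F))

theorem span_key (F : Type*) [Field F] (c : Localization.AtPrime (augIdeal F (ℕ × ℕ) natnat_pos_monoid))
    (hc : ¬ IsUnit c) (h1 : c ∣ monomialImage F (1, 0)) (h2 : c ∣ monomialImage F (0, 1)) :
    False := by
  classical
  have hinj : Function.Injective (algebraMap (AddMonoidAlgebra F (ℕ × ℕ))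
      (Localization.AtPrime (augIdeal F (ℕ × ℕ) natnat_pos_monoid))) :=
    IsLocalization.injective _ (augIdeal F (ℕ × ℕ) natnat_pos_monoid).primeCompl_le_nonZeroDivisors
  obtain ⟨a, hA⟩ := h1
  obtain ⟨b, hB⟩ := h2
  rw [monomialImage] at hA hB
  obtain ⟨⟨r, s⟩, hc'⟩ := IsLocalization.mk'_surjective
    (augIdeal F (ℕ × ℕ) natnat_pos_monoid).primeCompl c
  obtain ⟨⟨p, q⟩, ha'⟩ := IsLocalization.mk'_surjective
    (augIdeal F (ℕ × ℕ) natnat_pos_monoid).primeCompl a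
  obtain ⟨⟨p', q'⟩, hb'⟩ := IsLocalization.mk'_surjective
    (augIdeal F (ℕ × ℕ) natnat_pos_monoid).primeCompl b
  dsimp only at hc' ha' hb'
  have hr : r.coeff 0 = 0 := by
    rw [← mem_augIdeal_iff F (ℕ × ℕ) natnat_pos_monoid]
    by_contra hrm
    exact hc (by
      rw [← hc']
      exact (IsLocalization.AtPrime.isUnit_mk'_iff _
        (augIdeal F (ℕ × ℕ) natnat_pos_monoid) r s).mpr hrm)
  have hnm : ∀ u : (augIdeal F (ℕ × ℕ) natnat_pos_monoid).primeCompl,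
      (u : AddMonoidAlgebra F (ℕ × ℕ)).coeff 0 ≠ 0 := by
    intro u hu
    exact u.2 ((mem_augIdeal_iff F (ℕ × ℕ) natnat_pos_monoid _).mpr hu)
  have eq1 : AddMonoidAlgebra.single ((1 : ℕ), (0 : ℕ)) (1 : F) *
      ((s * q : (augIdeal F (ℕ × ℕ) natnat_pos_monoid).primeCompl) :
        AddMonoidAlgebra F (ℕ × ℕ)) = r * p := by
    apply hinj
    have hXD : algebraMap (AddMonoidAlgebra F (ℕ × ℕ))
        (Localization.AtPrime (augIdeal F (ℕ × ℕ) natnat_pos_monoid))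
        (AddMonoidAlgebra.single ((1 : ℕ), (0 : ℕ)) (1 : F)) =
        IsLocalization.mk' _ (r * p) (s * q) := by
      rw [IsLocalization.mk'_mul, hc', ha']; exact hA
    rw [map_mul, hXD, IsLocalization.mk'_spec]
  have eq2 : AddMonoidAlgebra.single ((0 : ℕ), (1 : ℕ)) (1 : F) *
      ((s * q' : (augIdeal F (ℕ × ℕ) natnat_pos_monoid).primeCompl) :
        AddMonoidAlgebra F (ℕ × ℕ)) = r * p' := by
    apply hinj
    have hYD : algebraMap (AddMonoidAlgebra F (ℕ × ℕ))
        (Localization.AtPrime (augIdeal F (ℕ × ℕ) natnat_pos_monoid))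
        (AddMonoidAlgebra.single ((0 : ℕ), (1 : ℕ)) (1 : F)) =
        IsLocalization.mk' _ (r * p') (s * q') := by
      rw [IsLocalization.mk'_mul, hc', hb']; exact hB
    rw [map_mul, hYD, IsLocalization.mk'_spec]
  exact core_contradiction F r p p' _ _ (hnm (s * q)) (hnm (s * q')) hr eq1 eq2

/-- Let `F` be a field, `R = F[X; ℕ × ℕ]` the monoid ring of `ℕ₀ × ℕ₀`,
`m` its maximal ideal of elements with zero constant term, and `D = R_m`. Then the ideal
of `D` generated by the images of `X^{(1,0)}` and `X^{(0,1)}` is proper but is not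
contained in any proper principal ideal of `D`; in particular `D` does not satisfy the
PC condition. -/
theorem localization_monoidAlgebra_natnat_not_pc (F : Type*) [Field F] :
    (Ideal.span {monomialImage F (1, 0), monomialImage F (0, 1)} ≠
      (⊤ : Ideal (Localization.AtPrime (augIdeal F (ℕ × ℕ) natnat_pos_monoid)))) ∧
    (∀ c : Localization.AtPrime (augIdeal F (ℕ × ℕ) natnat_pos_monoid),
      Ideal.span {monomialImage F (1, 0), monomialImage F (0, 1)} ≤ Ideal.span {c} →
      Ideal.span ({c} : Set (Localization.AtPrime (augIdeal F (ℕ × ℕ) natnat_pos_monoid))) = ⊤) ∧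
    ¬(∀ a b : Localization.AtPrime (augIdeal F (ℕ × ℕ) natnat_pos_monoid),
      Ideal.span {a, b} ≠ ⊤ →
      ∃ c, Ideal.span {a, b} ≤ Ideal.span {c} ∧
        Ideal.span ({c} : Set (Localization.AtPrime (augIdeal F (ℕ × ℕ) natnat_pos_monoid))) ≠ ⊤) := by
  classical
  set m := augIdeal F (ℕ × ℕ) natnat_pos_monoid with hm
  set D := Localization.AtPrime m with hD
  have hXm : AddMonoidAlgebra.single ((1 : ℕ), (0 : ℕ)) (1 : F) ∈ m := by
    rw [mem_augIdeal_iff]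
    rw [AddMonoidAlgebra.coeff_single_apply, if_neg (by decide)]
  have hYm : AddMonoidAlgebra.single ((0 : ℕ), (1 : ℕ)) (1 : F) ∈ m := by
    rw [mem_augIdeal_iff]
    rw [AddMonoidAlgebra.coeff_single_apply, if_neg (by decide)]
  have hXu : ¬ IsUnit (monomialImage F (1, 0)) := by
    rw [monomialImage]
    rw [IsLocalization.AtPrime.isUnit_to_map_iff D m]
    exact fun h => h hXm
  have hYu : ¬ IsUnit (monomialImage F (0, 1)) := by
    rw [monomialImage]
    rw [IsLocalization.AtPrime.isUnit_to_map_iff D m]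
    exact fun h => h hYm
  have part1 : Ideal.span {monomialImage F (1, 0), monomialImage F (0, 1)} ≠ (⊤ : Ideal D) := by
    have hle : Ideal.span {monomialImage F (1, 0), monomialImage F (0, 1)} ≤
        IsLocalRing.maximalIdeal D := by
      rw [Ideal.span_le]
      rintro z (rfl | rfl)
      · exact hXu
      · exact hYu
    exact fun h => (IsLocalRing.maximalIdeal.isMaximal D).ne_top (top_le_iff.mp (h ▸ hle))
  have part2 : ∀ c : D, Ideal.span {monomialImage F (1, 0), monomialImage F (0, 1)} ≤
      Ideal.span {c} → Ideal.span ({c} : Set D) = ⊤ := by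
    intro c hle
    by_contra hne
    have hc : ¬ IsUnit c := fun h => hne (Ideal.span_singleton_eq_top.mpr h)
    have h1 : c ∣ monomialImage F (1, 0) := Ideal.mem_span_singleton.mp
      (hle (Ideal.subset_span (by simp)))
    have h2 : c ∣ monomialImage F (0, 1) := Ideal.mem_span_singleton.mp
      (hle (Ideal.subset_span (by simp)))
    exact span_key F c hc h1 h2
  exact ⟨part1, part2, fun h => by
    obtain ⟨c, hle, hne⟩ := h _ _ part1
    exact hne (part2 c hle)⟩
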